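/- arXiv:1711.05032 — 2 statements merged into one kernel-verified Lean document; each statement's English description precedes it below -/
import Mathlib

section
/- Define U(e, ℓ) = 2^B · ((e + ℓ)/ℓ)^{−ℓ} + a·ℓ for e, ℓ > 0 and constants B ∈ ℝ, a > 0 (this equals 2^{B − ℓ·log₂(1+e/ℓ)} + a·ℓ using natural-exponent convention). Then the determinant of the Hessian of U with respect to (e, ℓ) equals P² · (ℓ/(ℓ+e)²) · log₂²(ℓ/(ℓ+e)), where P = 2^B · ((e+ℓ)/ℓ)^{−ℓ}. In particular the Hessian determinant is nonnegative. -/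
open Real Filter


/-- For U(e, ℓ) = 2^B · ((e + ℓ)/ℓ)^(−ℓ) + a·ℓ with e, ℓ > 0, the determinant of the
Hessian of U with respect to (e, ℓ) equals P² · (ℓ/(ℓ+e)²) · log²(ℓ/(ℓ+e)),
where P = 2^B · ((e+ℓ)/ℓ)^(−ℓ). In particular the Hessian determinant is nonnegative. -/
theorem hessian_det_formula (B a : ℝ) (ha : 0 < a) (e ℓ : ℝ) (he : 0 < e) (hl : 0 < ℓ) :
    let U : ℝ → ℝ → ℝ := fun x y => (2 : ℝ) ^ B * ((x + y) / y) ^ (-y) + a * y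
    let P : ℝ := (2 : ℝ) ^ B * ((e + ℓ) / ℓ) ^ (-ℓ)
    let Uee : ℝ := deriv (fun x => deriv (fun x' => U x' ℓ) x) e
    let Ull : ℝ := deriv (fun y => deriv (fun y' => U e y') y) ℓ
    let Uel : ℝ := deriv (fun y => deriv (fun x => U x y) e) ℓ
    Uee * Ull - Uel ^ 2
      = P ^ 2 * (ℓ / (ℓ + e) ^ 2) * (Real.log (ℓ / (ℓ + e))) ^ 2 ∧
    0 ≤ Uee * Ull - Uel ^ 2 := by
  intro U P Uee Ull Uel
  set c : ℝ := (2 : ℝ) ^ B with hc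
  have hcpos : 0 < c := Real.rpow_pos_of_pos two_pos B
  have hs : 0 < e + ℓ := by linarith
  -- x-derivative lemma
  have hA1 : ∀ y, 0 < y → ∀ x, 0 < x + y →
      HasDerivAt (fun x' => U x' y) (-c * ((x + y) / y) ^ (-y - 1)) x := by
    intro y hy x hxy
    have hb : (0:ℝ) < (x + y) / y := div_pos hxy hy
    have h0 : HasDerivAt (fun x' : ℝ => (x' + y) / y) (1 / y) x :=
      ((hasDerivAt_id x).add_const y).div_const y
    have h1 := h0.rpow_const (p := -y) (Or.inl hb.ne')
    have h2 := (h1.const_mul c).add_const (a * y)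
    have hv : c * (1 / y * -y * ((x + y) / y) ^ (-y - 1))
        = -c * ((x + y) / y) ^ (-y - 1) := by field_simp
    rw [hv] at h2
    exact h2
  ---- Uee
  have hA2 : (fun x => deriv (fun x' => U x' ℓ) x)
      =ᶠ[nhds e] (fun x => -c * ((x + ℓ) / ℓ) ^ (-ℓ - 1)) := by
    filter_upwards [eventually_gt_nhds (show -ℓ < e by linarith)] with x hx
    exact (hA1 ℓ hl x (by linarith)).deriv
  have hA3 : HasDerivAt (fun x => -c * ((x + ℓ) / ℓ) ^ (-ℓ - 1))
      (-c * (1 / ℓ * (-ℓ - 1) * ((e + ℓ) / ℓ) ^ (-ℓ - 1 - 1))) e := by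
    have h0 : HasDerivAt (fun x : ℝ => (x + ℓ) / ℓ) (1 / ℓ) e :=
      ((hasDerivAt_id e).add_const ℓ).div_const ℓ
    exact (h0.rpow_const (p := -ℓ - 1) (Or.inl (div_pos hs hl).ne')).const_mul (-c)
  have hUee : Uee = -c * (1 / ℓ * (-ℓ - 1) * ((e + ℓ) / ℓ) ^ (-ℓ - 1 - 1)) :=
    hA2.deriv_eq.trans hA3.deriv
  ---- Ull
  -- derivative of the exp-form in y at a point y > 0
  have hlog1 : ∀ y : ℝ, 0 < y → HasDerivAt (fun y' => Real.log (e + y')) (1 / (e + y)) y := by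
    intro y hy
    exact ((hasDerivAt_id y).const_add e).log (by positivity)
  have hm : ∀ y : ℝ, 0 < y →
      HasDerivAt (fun y' => (Real.log (e + y') - Real.log y') * -y')
        ((1 / (e + y) - y⁻¹) * -y + (Real.log (e + y) - Real.log y) * -1) y := by
    intro y hy
    exact (((hlog1 y hy).sub (Real.hasDerivAt_log hy.ne')).mul (hasDerivAt_id y).neg)
  have hB1 : ∀ y, 0 < y → HasDerivAt (fun y' => U e y')
      (c * Real.exp ((Real.log (e + y) - Real.log y) * -y)
        * (((e + y)⁻¹ - y⁻¹) * -y - (Real.log (e + y) - Real.log y)) + a) y := by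
    intro y hy
    have hF := (((hm y hy).exp.const_mul c).add ((hasDerivAt_id y).const_mul a))
    have hv : c * (Real.exp ((Real.log (e + y) - Real.log y) * -y)
          * ((1 / (e + y) - y⁻¹) * -y + (Real.log (e + y) - Real.log y) * -1)) + a * 1
        = c * Real.exp ((Real.log (e + y) - Real.log y) * -y)
          * (((e + y)⁻¹ - y⁻¹) * -y - (Real.log (e + y) - Real.log y)) + a := by ring
    rw [hv] at hF
    refine hF.congr_of_eventuallyEq ?_
    filter_upwards [eventually_gt_nhds hy] with y' hy'
    show c * ((e + y') / y') ^ (-y') + a * y' = _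
    simp only [id_eq]
    rw [Real.rpow_def_of_pos (div_pos (by linarith) hy'),
      Real.log_div (by positivity) hy'.ne']
    rfl
  have hB2 : (fun y => deriv (fun y' => U e y') y) =ᶠ[nhds ℓ]
      (fun y => c * Real.exp ((Real.log (e + y) - Real.log y) * -y)
        * (((e + y)⁻¹ - y⁻¹) * -y - (Real.log (e + y) - Real.log y)) + a) := by
    filter_upwards [eventually_gt_nhds hl] with y hy
    exact (hB1 y hy).deriv
  have hi1 : HasDerivAt (fun y : ℝ => (e + y)⁻¹) (-1 / (e + ℓ) ^ 2) ℓ :=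
    ((hasDerivAt_id ℓ).const_add e).inv hs.ne'
  have hi2 : HasDerivAt (fun y : ℝ => y⁻¹) (-1 / ℓ ^ 2) ℓ := (hasDerivAt_id ℓ).inv hl.ne'
  have hW : HasDerivAt
      (fun y => ((e + y)⁻¹ - y⁻¹) * -y - (Real.log (e + y) - Real.log y))
      ((-1 / (e + ℓ) ^ 2 - -1 / ℓ ^ 2) * -ℓ + ((e + ℓ)⁻¹ - ℓ⁻¹) * -1
        - (1 / (e + ℓ) - ℓ⁻¹)) ℓ :=
    ((hi1.sub hi2).mul (hasDerivAt_id ℓ).neg).sub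
      ((hlog1 ℓ hl).sub (Real.hasDerivAt_log hl.ne'))
  have hD1 := (((hm ℓ hl).exp.const_mul c).mul hW).add_const a
  have hUll : Ull = _ := hB2.deriv_eq.trans hD1.deriv
  ---- Uel
  have hC2 : (fun y => deriv (fun x => U x y) e) =ᶠ[nhds ℓ]
      (fun y => -c * Real.exp ((Real.log (e + y) - Real.log y) * (-y - 1))) := by
    filter_upwards [eventually_gt_nhds hl] with y hy
    rw [(hA1 y hy e (by linarith)).deriv,
      Real.rpow_def_of_pos (div_pos (by linarith) hy),
      Real.log_div (by positivity) hy.ne']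
  have hm2 : HasDerivAt (fun y => (Real.log (e + y) - Real.log y) * (-y - 1))
      ((1 / (e + ℓ) - ℓ⁻¹) * (-ℓ - 1) + (Real.log (e + ℓ) - Real.log ℓ) * -1) ℓ :=
    ((hlog1 ℓ hl).sub (Real.hasDerivAt_log hl.ne')).mul
      ((hasDerivAt_id ℓ).neg.sub_const 1)
  have hD2 := hm2.exp.const_mul (-c)
  have hUel : Uel = _ := hC2.deriv_eq.trans hD2.deriv
  ---- conversions
  have hpow : ∀ t : ℝ, ((e + ℓ) / ℓ) ^ t
      = Real.exp ((Real.log (e + ℓ) - Real.log ℓ) * t) := by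
    intro t
    rw [Real.rpow_def_of_pos (div_pos hs hl), Real.log_div hs.ne' hl.ne']
  have hexpnegL : Real.exp (-(Real.log (e + ℓ) - Real.log ℓ)) = ℓ / (e + ℓ) := by
    rw [show -(Real.log (e + ℓ) - Real.log ℓ) = Real.log (ℓ / (e + ℓ)) by
      rw [Real.log_div hl.ne' hs.ne']; ring]
    exact Real.exp_log (div_pos hl hs)
  have hE1 : Real.exp ((Real.log (e + ℓ) - Real.log ℓ) * (-ℓ - 1))
      = Real.exp ((Real.log (e + ℓ) - Real.log ℓ) * -ℓ) * (ℓ / (e + ℓ)) := by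
    rw [show (Real.log (e + ℓ) - Real.log ℓ) * (-ℓ - 1)
        = (Real.log (e + ℓ) - Real.log ℓ) * -ℓ + -(Real.log (e + ℓ) - Real.log ℓ) by ring,
      Real.exp_add, hexpnegL]
  have hE2 : Real.exp ((Real.log (e + ℓ) - Real.log ℓ) * (-ℓ - 1 - 1))
      = Real.exp ((Real.log (e + ℓ) - Real.log ℓ) * -ℓ) * (ℓ / (e + ℓ)) * (ℓ / (e + ℓ)) := by
    rw [show (Real.log (e + ℓ) - Real.log ℓ) * (-ℓ - 1 - 1)
        = ((Real.log (e + ℓ) - Real.log ℓ) * -ℓ + -(Real.log (e + ℓ) - Real.log ℓ))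
          + -(Real.log (e + ℓ) - Real.log ℓ) by ring,
      Real.exp_add, Real.exp_add, hexpnegL]
  have hP : P = c * Real.exp ((Real.log (e + ℓ) - Real.log ℓ) * -ℓ) := by
    show c * ((e + ℓ) / ℓ) ^ (-ℓ) = _
    rw [hpow]
  have hlogT : Real.log (ℓ / (ℓ + e)) = -(Real.log (e + ℓ) - Real.log ℓ) := by
    rw [show ℓ + e = e + ℓ from add_comm ℓ e, Real.log_div hl.ne' hs.ne']; ring
  have key : Uee * Ull - Uel ^ 2
      = P ^ 2 * (ℓ / (ℓ + e) ^ 2) * (Real.log (ℓ / (ℓ + e))) ^ 2 := by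
    rw [hUee, hUll, hUel, hP, hlogT, hpow, hE1, hE2,
      show ℓ + e = e + ℓ from add_comm ℓ e]
    field_simp
    ring
  exact ⟨key, key ▸ by
    have h1 : (0:ℝ) ≤ ℓ / (ℓ + e) ^ 2 := div_nonneg hl.le (sq_nonneg _)
    have := mul_nonneg (mul_nonneg (sq_nonneg P) h1) (sq_nonneg (Real.log (ℓ / (ℓ + e))))
    linarith⟩
end

section
/- Let b : ℕ → ℝ be a function where b(k) is the number of bits transmitted using k resource blocks in a slot, b(k) = ℓ·log₂(1 + e·k/ℓ) for constants e, ℓ > 0. Then the distortion k ↦ 2^{B − b(k)} is a convex, decreasing function of k ∈ ℕ, i.e., 2^{B−b(k+1)} − 2^{B−b(k+2)} ≤ 2^{B−b(k)} − 2^{B−b(k+1)} for all k. -/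
private lemma rpow_neg_midpoint {x y z L : ℝ} (hx : 0 < x) (hy : 0 < y) (hz : 0 < z)
    (hL : 0 < L) (h : x * z ≤ y ^ 2) :
    2 * y ^ (-L) ≤ x ^ (-L) + z ^ (-L) := by
  have ha : (0:ℝ) < x ^ (-L) := Real.rpow_pos_of_pos hx _
  have hb : (0:ℝ) < z ^ (-L) := Real.rpow_pos_of_pos hz _
  have hxz : 0 < x * z := mul_pos hx hz
  -- AM-GM : 2 * sqrt (a*b) ≤ a + b
  have hamgm : 2 * Real.sqrt (x ^ (-L) * z ^ (-L)) ≤ x ^ (-L) + z ^ (-L) := by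
    rw [Real.sqrt_mul ha.le]
    nlinarith [Real.sq_sqrt ha.le, Real.sq_sqrt hb.le, sq_nonneg (Real.sqrt (x ^ (-L)) - Real.sqrt (z ^ (-L))), Real.sqrt_nonneg (x ^ (-L)), Real.sqrt_nonneg (z ^ (-L))]
  have hsqrt : Real.sqrt (x ^ (-L) * z ^ (-L)) = (x * z) ^ (-(L/2)) := by
    rw [← Real.mul_rpow hx.le hz.le, Real.sqrt_eq_rpow, ← Real.rpow_mul hxz.le]
    ring_nf
  have hy2 : (y ^ 2 : ℝ) ^ (-(L/2)) = y ^ (-L) := by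
    rw [← Real.rpow_natCast y 2, ← Real.rpow_mul hy.le]
    push_cast
    ring_nf
  have hmono : (y ^ 2 : ℝ) ^ (-(L/2)) ≤ (x * z) ^ (-(L/2)) :=
    Real.rpow_le_rpow_of_nonpos hxz h (by linarith)
  calc 2 * y ^ (-L) = 2 * (y ^ 2 : ℝ) ^ (-(L/2)) := by rw [hy2]
    _ ≤ 2 * (x * z) ^ (-(L/2)) := by linarith
    _ = 2 * Real.sqrt (x ^ (-L) * z ^ (-L)) := by rw [hsqrt]
    _ ≤ x ^ (-L) + z ^ (-L) := hamgm

/-- With b(k) = ℓ·log₂(1 + e·k/ℓ) the bits transmitted with k resource blocks,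
the distortion k ↦ 2^(B − b(k)) is decreasing and convex over the integers
(decreasing successive differences). -/
theorem discrete_distortion_convex_decreasing (B e ℓ : ℝ) (he : 0 < e) (hl : 0 < ℓ) :
    let b : ℕ → ℝ := fun k => ℓ * Real.logb 2 (1 + e * k / ℓ)
    (∀ k : ℕ, (2 : ℝ) ^ (B - b (k + 1)) ≤ (2 : ℝ) ^ (B - b k)) ∧
    (∀ k : ℕ,
      (2 : ℝ) ^ (B - b (k + 1)) - (2 : ℝ) ^ (B - b (k + 2)) ≤
      (2 : ℝ) ^ (B - b k) - (2 : ℝ) ^ (B - b (k + 1))) := by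
  intro b
  have hu : ∀ k : ℕ, (0:ℝ) < 1 + e * k / ℓ := by
    intro k
    have : (0:ℝ) ≤ e * k / ℓ := by positivity
    linarith
  have hkey : ∀ k : ℕ, (2:ℝ) ^ (B - b k) = (2:ℝ) ^ B * (1 + e * k / ℓ) ^ (-ℓ) := by
    intro k
    have h2 : (2:ℝ) ^ (Real.logb 2 (1 + e * k / ℓ)) = 1 + e * k / ℓ :=
      Real.rpow_logb two_pos (by norm_num) (hu k)
    have hbk : (2:ℝ) ^ (b k) = (1 + e * k / ℓ) ^ ℓ := by
      simp only [b]
      rw [mul_comm ℓ, Real.rpow_mul two_pos.le, h2]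
    rw [Real.rpow_sub two_pos, hbk, Real.rpow_neg (hu k).le, div_eq_mul_inv]
  have hmono : ∀ k : ℕ, (1 + e * (k+1:ℕ) / ℓ : ℝ) ^ (-ℓ) ≤ (1 + e * k / ℓ) ^ (-ℓ) := by
    intro k
    apply Real.rpow_le_rpow_of_nonpos (hu k) _ (by linarith)
    push_cast
    have : e * (k:ℝ) / ℓ ≤ e * ((k:ℝ)+1) / ℓ := by
      gcongr <;> linarith
    linarith
  constructor
  · intro k
    rw [hkey, hkey]
    have h2B : (0:ℝ) < (2:ℝ) ^ B := Real.rpow_pos_of_pos two_pos _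
    exact mul_le_mul_of_nonneg_left (hmono k) h2B.le
  · intro k
    rw [hkey, hkey, hkey]
    have h2B : (0:ℝ) < (2:ℝ) ^ B := Real.rpow_pos_of_pos two_pos _
    have hmid : 2 * ((1 + e * ((k:ℕ)+1:ℕ) / ℓ : ℝ)) ^ (-ℓ) ≤
        (1 + e * k / ℓ) ^ (-ℓ) + (1 + e * ((k:ℕ)+2:ℕ) / ℓ : ℝ) ^ (-ℓ) := by
      apply rpow_neg_midpoint (hu k) (hu (k+1)) (hu (k+2)) hl
      push_cast
      have key : ((1:ℝ) + e*((k:ℝ)+1)/ℓ)^2 = (1+e*(k:ℝ)/ℓ)*(1+e*((k:ℝ)+2)/ℓ) + (e/ℓ)^2 := by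
        field_simp
        ring
      nlinarith [sq_nonneg (e/ℓ)]
    nlinarith [hmid, h2B]
end
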